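/- arXiv:2401.03583 — 3 statements merged into one kernel-verified Lean document; each statement's English description precedes it below -/
import Mathlib

section
/- Let $p \in [1,2]$, and let $u: \mathbb{R}^3 \to \mathbb{R}^\nu$ be differentiable at a boundary point with full gradient $Du$ decomposed into tangential part $D_\top u$ and normal part $D_\perp u = Du[\nu]$ along a unit vector $\nu$, so $|Du|^2 = |D_\top u|^2 + |D_\perp u|^2$. Define $T^p_u = \frac{|Du|^p}{p}\mathrm{Id} - |Du|^{p-2}(Du)^T Du$. Then $(p-1)|D_\perp u|^p \le -p\langle \nu, T^p_u[\nu]\rangle + (3-p)|D_\top u|^p$. -/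
noncomputable section

lemma pow2_rpow' {x : ℝ} (hx : 0 ≤ x) (q : ℝ) : (x ^ (2:ℕ)) ^ q = x ^ (2 * q) := by
  rw [← Real.rpow_natCast x 2, ← Real.rpow_mul hx]; norm_num

lemma add_rpow_le' {x y q : ℝ} (hx : 0 ≤ x) (hy : 0 ≤ y) (hq0 : 0 ≤ q) (hq1 : q ≤ 1) :
    (x + y) ^ q ≤ x ^ q + y ^ q := by
  have h := NNReal.rpow_add_le_add_rpow (⟨x, hx⟩ : NNReal) (⟨y, hy⟩ : NNReal) hq0 hq1
  exact_mod_cast h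

/-- Normal derivative estimate at a boundary point: for a map with partial derivatives
`D i`, unit normal `νv`, normal part `Dperp = ∑ νv i • D i`, full gradient norm
`nd = |Du|`, tangential norm `ntop` with `nd² = ntop² + |Dperp|²`, and
`⟨ν, T^p_u[ν]⟩ = |Du|^p/p - |Du|^{p-2}|Dperp|²`, one has
`(p-1)|Dperp|^p ≤ -p⟨ν,T^p_u[ν]⟩ + (3-p)|Dtop|^p` for `1 ≤ p ≤ 2`. -/
theorem stmt5 (k : ℕ) (p : ℝ) (hp1 : 1 ≤ p) (hp2 : p ≤ 2)
    (D : Fin 3 → EuclideanSpace ℝ (Fin k)) (νv : Fin 3 → ℝ)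
    (hν : ∑ i, νv i ^ (2 : ℕ) = 1)
    (Dperp : EuclideanSpace ℝ (Fin k)) (hDperp : Dperp = ∑ i, νv i • D i)
    (nd : ℝ) (hnd : nd = Real.sqrt (∑ i, ‖D i‖ ^ (2 : ℕ)))
    (ntop : ℝ) (hntop : ntop = Real.sqrt (nd ^ (2 : ℕ) - ‖Dperp‖ ^ (2 : ℕ)))
    (tT : ℝ) (htT : tT = nd ^ p / p - nd ^ (p - 2) * ‖Dperp‖ ^ (2 : ℕ)) :
    (p - 1) * ‖Dperp‖ ^ p ≤ -(p * tT) + (3 - p) * ntop ^ p := by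
  have hp0 : (0:ℝ) < p := lt_of_lt_of_le one_pos hp1
  set a := ‖Dperp‖ with ha
  have ha0 : 0 ≤ a := norm_nonneg _
  have hnd0 : 0 ≤ nd := hnd ▸ Real.sqrt_nonneg _
  -- Cauchy–Schwarz: a ≤ nd
  have hCS : a ≤ nd := by
    have h1 : a ≤ ∑ i, |νv i| * ‖D i‖ := by
      rw [ha, hDperp]
      refine (norm_sum_le _ _).trans_eq ?_
      simp [norm_smul]
    have h2 : (∑ i, |νv i| * ‖D i‖) ^ 2 ≤ (∑ i, |νv i| ^ 2) * (∑ i, ‖D i‖ ^ 2) :=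
      Finset.sum_mul_sq_le_sq_mul_sq _ _ _
    have h3 : (∑ i : Fin 3, |νv i| ^ 2) = 1 := by simpa [sq_abs] using hν
    have h4 : (∑ i, |νv i| * ‖D i‖) ^ 2 ≤ nd ^ 2 := by
      rw [hnd, Real.sq_sqrt (Finset.sum_nonneg fun i _ => sq_nonneg _)]
      simpa [sq_abs, hν] using h2
    nlinarith [h1, h4, hnd0, ha0]
  have ht0 : 0 ≤ ntop := hntop ▸ Real.sqrt_nonneg _
  have ht2 : ntop ^ (2:ℕ) = nd ^ (2:ℕ) - a ^ (2:ℕ) := by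
    rw [hntop, Real.sq_sqrt (by nlinarith)]
  rcases eq_or_lt_of_le hnd0 with h0 | hndpos
  · -- degenerate case nd = 0
    have hae : a = 0 := le_antisymm (h0 ▸ hCS) ha0
    have hte : ntop = 0 := by
      have : ntop ^ (2:ℕ) = 0 := by rw [ht2, ← h0, hae]; ring
      exact pow_eq_zero_iff (by norm_num) |>.mp this
    rw [htT, hae, hte, ← h0]
    simp [Real.zero_rpow hp0.ne']
  -- main case nd > 0
  have hYoung : a ^ p ≤ p / 2 * (a ^ (2:ℕ) * nd ^ (p - 2)) + (2 - p) / 2 * nd ^ p := by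
    have hprod : (a ^ (2:ℕ) * nd ^ (p - 2)) ^ (p / 2) * (nd ^ p) ^ ((2 - p) / 2) = a ^ p := by
      have eA : (a ^ (2:ℕ) * nd ^ (p - 2)) ^ (p / 2)
          = a ^ p * nd ^ ((p - 2) * (p / 2)) := by
        rw [Real.mul_rpow (by positivity) (by positivity), pow2_rpow' ha0,
          ← Real.rpow_mul hndpos.le, show 2 * (p / 2) = p by ring]
      have eB : (nd ^ p) ^ ((2 - p) / 2) = nd ^ (p * ((2 - p) / 2)) :=
        (Real.rpow_mul hndpos.le _ _).symm
      rw [eA, eB, mul_assoc, ← Real.rpow_add hndpos]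
      have e2 : (p - 2) * (p / 2) + p * ((2 - p) / 2) = 0 := by ring
      rw [e2, Real.rpow_zero, mul_one]
    calc a ^ p = (a ^ (2:ℕ) * nd ^ (p - 2)) ^ (p / 2) * (nd ^ p) ^ ((2 - p) / 2) := hprod.symm
      _ ≤ _ := Real.geom_mean_le_arith_mean2_weighted (by linarith) (by linarith)
          (by positivity) (by positivity) (by ring)
  have hsub : nd ^ p ≤ a ^ p + ntop ^ p := by
    have h1 : nd ^ p = (a ^ (2:ℕ) + ntop ^ (2:ℕ)) ^ (p / 2) := by
      have e : a ^ (2:ℕ) + ntop ^ (2:ℕ) = nd ^ (2:ℕ) := by rw [ht2]; ring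
      rw [e, pow2_rpow' hnd0, show 2 * (p / 2) = p by ring]
    have h2 := add_rpow_le' (x := a ^ (2:ℕ)) (y := ntop ^ (2:ℕ)) (by positivity) (by positivity)
      (by linarith : (0:ℝ) ≤ p / 2) (by linarith : p / 2 ≤ 1)
    have e3 : (a ^ (2:ℕ)) ^ (p / 2) = a ^ p := by
      rw [pow2_rpow' ha0, show 2 * (p / 2) = p by ring]
    have e4 : (ntop ^ (2:ℕ)) ^ (p / 2) = ntop ^ p := by
      rw [pow2_rpow' ht0, show 2 * (p / 2) = p by ring]
    rw [h1]; rw [e3, e4] at h2; exact h2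
  have htT' : p * tT = nd ^ p - p * (nd ^ (p - 2) * a ^ (2:ℕ)) := by
    rw [htT]; field_simp
  rw [htT']
  nlinarith [hYoung, hsub, mul_nonneg (by linarith : (0:ℝ) ≤ 3 - p)
    (by linarith : (0:ℝ) ≤ a ^ p + ntop ^ p - nd ^ p)]
end
end

section
/- Let $p \in (1,2]$, $\nu$ a unit vector, and $u$ differentiable at a point with gradient decomposition $|Du|^2 = |D_\top u|^2 + |D_\perp u|^2$ where $D_\perp u = Du[\nu]$. If $(p-1)|D_\perp u|^2 \le |D_\top u|^2$, then $0 \le \langle \nu, T^p_u[\nu]\rangle \le \frac{2}{p}|D_\top u|^p$, where $T^p_u = \frac{|Du|^p}{p}\mathrm{Id} - |Du|^{p-2}(Du)^T Du$. -/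
noncomputable section

/-- For `1 < p ≤ 2`, at a point where the gradient satisfies
`(p-1)|D_⊥u|² ≤ |D_⊤u|²`, the normal component of the stress-energy tensor
`⟨ν, T^p_u[ν]⟩ = |Du|^p/p - |Du|^{p-2}|D_⊥u|²` satisfies
`0 ≤ ⟨ν, T^p_u[ν]⟩ ≤ (2/p)|D_⊤u|^p`. -/
theorem stmt6 (k : ℕ) (p : ℝ) (hp1 : 1 < p) (hp2 : p ≤ 2)
    (D : Fin 3 → EuclideanSpace ℝ (Fin k)) (νv : Fin 3 → ℝ)
    (hν : ∑ i, νv i ^ (2 : ℕ) = 1)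
    (Dperp : EuclideanSpace ℝ (Fin k)) (hDperp : Dperp = ∑ i, νv i • D i)
    (nd : ℝ) (hnd : nd = Real.sqrt (∑ i, ‖D i‖ ^ (2 : ℕ)))
    (ntop : ℝ) (hntop : ntop = Real.sqrt (nd ^ (2 : ℕ) - ‖Dperp‖ ^ (2 : ℕ)))
    (tT : ℝ) (htT : tT = nd ^ p / p - nd ^ (p - 2) * ‖Dperp‖ ^ (2 : ℕ))
    (hsmall : (p - 1) * ‖Dperp‖ ^ (2 : ℕ) ≤ ntop ^ (2 : ℕ)) :
    0 ≤ tT ∧ tT ≤ 2 / p * ntop ^ p := by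
  have hp0 : 0 < p := by linarith
  have hsum0 : 0 ≤ ∑ i, ‖D i‖ ^ (2 : ℕ) :=
    Finset.sum_nonneg fun i _ => by positivity
  have hnd0 : 0 ≤ nd := hnd ▸ Real.sqrt_nonneg _
  have hnd2 : nd ^ (2 : ℕ) = ∑ i, ‖D i‖ ^ (2 : ℕ) := by
    rw [hnd]; exact Real.sq_sqrt hsum0
  -- Cauchy–Schwarz: ‖Dperp‖² ≤ nd²
  have hperp_le : ‖Dperp‖ ≤ ∑ i, |νv i| * ‖D i‖ := by
    rw [hDperp]
    refine (norm_sum_le _ _).trans_eq ?_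
    exact Finset.sum_congr rfl fun i _ => by rw [norm_smul, Real.norm_eq_abs]
  have hCS : ‖Dperp‖ ^ (2 : ℕ) ≤ nd ^ (2 : ℕ) := by
    have h1 : (∑ i, |νv i| * ‖D i‖) ^ (2 : ℕ) ≤
        (∑ i, |νv i| ^ (2 : ℕ)) * ∑ i, ‖D i‖ ^ (2 : ℕ) :=
      Finset.sum_mul_sq_le_sq_mul_sq _ _ _
    have h2 : (∑ i, |νv i| ^ (2 : ℕ)) = 1 := by
      rw [← hν]; exact Finset.sum_congr rfl fun i _ => sq_abs _
    have h3 : ‖Dperp‖ ^ (2 : ℕ) ≤ (∑ i, |νv i| * ‖D i‖) ^ (2 : ℕ) := by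
      apply pow_le_pow_left₀ (norm_nonneg _) hperp_le
    rw [hnd2]
    calc ‖Dperp‖ ^ (2 : ℕ) ≤ (∑ i, |νv i| * ‖D i‖) ^ (2 : ℕ) := h3
      _ ≤ _ := h1
      _ = ∑ i, ‖D i‖ ^ (2 : ℕ) := by rw [h2, one_mul]
  have hntop0 : 0 ≤ ntop := hntop ▸ Real.sqrt_nonneg _
  have hntop2 : ntop ^ (2 : ℕ) = nd ^ (2 : ℕ) - ‖Dperp‖ ^ (2 : ℕ) := by
    rw [hntop]; exact Real.sq_sqrt (by linarith)
  have hb0 : (0:ℝ) ≤ ‖Dperp‖ ^ (2 : ℕ) := by positivity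
  rcases eq_or_lt_of_le hnd0 with h0 | hndpos
  · -- nd = 0
    have hnd' : nd = 0 := h0.symm
    have hb : ‖Dperp‖ ^ (2 : ℕ) = 0 := le_antisymm (by rw [← hnd'] at *; nlinarith) hb0
    have hnt : ntop = 0 := by
      rw [hntop, hnd', hb]; simp
    have htT0 : tT = 0 := by
      rw [htT, hnd', hb, Real.zero_rpow hp0.ne', mul_zero, zero_div, sub_zero]
    constructor
    · rw [htT0]
    · rw [htT0, hnt, Real.zero_rpow hp0.ne', mul_zero]
  · -- nd > 0
    have hndp : nd ^ p = nd ^ (p - 2) * nd ^ (2 : ℕ) := by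
      rw [← Real.rpow_natCast nd 2, ← Real.rpow_add hndpos]
      norm_num
    have hrw : tT = nd ^ (p - 2) / p * (ntop ^ (2 : ℕ) - (p - 1) * ‖Dperp‖ ^ (2 : ℕ)) := by
      rw [htT, hndp, hntop2]; field_simp; ring
    have hA : (0:ℝ) ≤ nd ^ (p - 2) := Real.rpow_nonneg hnd0 _
    constructor
    · rw [hrw]
      apply mul_nonneg (div_nonneg hA hp0.le)
      linarith
    · have hstep : tT ≤ nd ^ (p - 2) / p * ntop ^ (2 : ℕ) := by
        rw [hrw]
        apply mul_le_mul_of_nonneg_left _ (div_nonneg hA hp0.le)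
        nlinarith
      rcases eq_or_lt_of_le hntop0 with ht0 | htpos
      · have h1 : ntop = 0 := ht0.symm
        rw [h1] at hstep ⊢
        rw [Real.zero_rpow hp0.ne', mul_zero]
        simpa using hstep
      · have hle : ntop ≤ nd := by
          nlinarith [hntop2, hb0]
        have hmono : nd ^ (p - 2) ≤ ntop ^ (p - 2) :=
          Real.rpow_le_rpow_of_nonpos htpos hle (by linarith)
        have hnp : ntop ^ (p - 2) * ntop ^ (2 : ℕ) = ntop ^ p := by
          rw [← Real.rpow_natCast ntop 2, ← Real.rpow_add htpos]
          norm_num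
        have ht2 : (0:ℝ) ≤ ntop ^ (2 : ℕ) := by positivity
        have : nd ^ (p - 2) * ntop ^ (2 : ℕ) ≤ ntop ^ p := by
          rw [← hnp]; exact mul_le_mul_of_nonneg_right hmono ht2
        have hfin : nd ^ (p - 2) / p * ntop ^ (2 : ℕ) ≤ 2 / p * ntop ^ p := by
          have h2 : nd ^ (p - 2) * ntop ^ (2 : ℕ) ≤ 2 * ntop ^ p := by
            nlinarith [Real.rpow_nonneg hntop0 p]
          calc nd ^ (p - 2) / p * ntop ^ (2 : ℕ)
              = (nd ^ (p - 2) * ntop ^ (2 : ℕ)) / p := by ring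
            _ ≤ (2 * ntop ^ p) / p := by gcongr
            _ = 2 / p * ntop ^ p := by ring
        exact hstep.trans hfin
end
end

section
/- Let $\mu_n, \mu_*$ be finite positive Radon measures on a compact set $\overline{\Omega} \subset \mathbb{R}^3$ with $\mu_n \overset{*}{\rightharpoonup} \mu_*$ weakly* (i.e., $\int \varphi \, d\mu_n \to \int \varphi \, d\mu_*$ for all $\varphi \in C(\overline{\Omega})$). Suppose $x_0 \in \Omega$, $(p_n) \subset [1,2)$ with $p_n \nearrow 2$, and for every $0 < \varrho < r < \mathrm{dist}(x_0, \partial\Omega)$ and each $n$, $\varrho^{p_n - 3}\mu_n(B^3_\varrho(x_0)) \le r^{p_n-3}\mu_n(\overline{B}^3_r(x_0))$. Then the function $r \mapsto \mu_*(\overline{B}^3_r(x_0))/r$ is nondecreasing on $(0, \mathrm{dist}(x_0, \partial\Omega))$. In particular, the one-dimensional density $\Theta_1(\mu_*, x_0) = \lim_{r \to 0^+} \mu_*(\overline{B}^3_r(x_0))/(2r)$ exists and is finite. -/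
open MeasureTheory Metric Filter Set Topology

noncomputable section

/-- A bump function that is 1 on `closedBall x0 a` and 0 outside `ball x0 (a+ε)`,
with integral between the measures of these sets. -/
lemma stmt13_bump (x0 : EuclideanSpace ℝ (Fin 3)) (a ε : ℝ) (ha : 0 ≤ a) (hε : 0 < ε) :
    ∃ ψ : EuclideanSpace ℝ (Fin 3) → ℝ, Continuous ψ ∧
      ∀ (μ : Measure (EuclideanSpace ℝ (Fin 3))) [IsFiniteMeasure μ],
        (μ (closedBall x0 a)).toReal ≤ ∫ x, ψ x ∂μ ∧
        ∫ x, ψ x ∂μ ≤ (μ (ball x0 (a + ε))).toReal := by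
  set ψ : EuclideanSpace ℝ (Fin 3) → ℝ := fun x => max 0 (min 1 ((a + ε - dist x x0) / ε)) with hψ
  have hcont : Continuous ψ := by
    apply continuous_const.max
    exact continuous_const.min ((continuous_const.sub (continuous_id.dist continuous_const)).div_const ε)
  have h1 : ∀ x, dist x x0 ≤ a → ψ x = 1 := by
    intro x hx
    have : (1 : ℝ) ≤ (a + ε - dist x x0) / ε := by
      rw [le_div_iff₀ hε]; linarith
    simp only [hψ, min_eq_left this, max_eq_right zero_le_one]
  have h0 : ∀ x, a + ε ≤ dist x x0 → ψ x = 0 := by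
    intro x hx
    have h2 : (a + ε - dist x x0) / ε ≤ 0 := div_nonpos_of_nonpos_of_nonneg (by linarith) hε.le
    simp only [hψ, max_eq_left ((min_le_right _ _).trans h2)]
  have hψ01 : ∀ x, 0 ≤ ψ x ∧ ψ x ≤ 1 := fun x =>
    ⟨le_max_left _ _, max_le zero_le_one (min_le_left _ _)⟩
  have hsupp : HasCompactSupport ψ := by
    apply HasCompactSupport.intro (isCompact_closedBall x0 (a + ε))
    intro x hx
    exact h0 x (le_of_lt (by simpa [mem_closedBall] using hx))
  refine ⟨ψ, hcont, fun μ _ => ?_⟩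
  have hint : Integrable ψ μ := hcont.integrable_of_hasCompactSupport hsupp
  constructor
  · have hle : ∀ x, (closedBall x0 a).indicator (fun _ => (1:ℝ)) x ≤ ψ x := by
      intro x
      by_cases hx : x ∈ closedBall x0 a
      · rw [indicator_of_mem hx, h1 x (mem_closedBall.mp hx)]
      · rw [indicator_of_notMem hx]; exact (hψ01 x).1
    have := integral_mono ((integrable_const (1:ℝ)).indicator measurableSet_closedBall) hint hle
    rwa [integral_indicator_const (1:ℝ) measurableSet_closedBall, smul_eq_mul, mul_one] at this
  · have hle : ∀ x, ψ x ≤ (ball x0 (a + ε)).indicator (fun _ => (1:ℝ)) x := by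
      intro x
      by_cases hx : x ∈ ball x0 (a + ε)
      · rw [indicator_of_mem hx]; exact (hψ01 x).2
      · rw [indicator_of_notMem hx, h0 x (by simpa [mem_ball] using hx)]
    have := integral_mono hint ((integrable_const (1:ℝ)).indicator measurableSet_ball) hle
    rwa [integral_indicator_const (1:ℝ) measurableSet_ball, smul_eq_mul, mul_one] at this

/-- Monotonicity of the rescaled mass of the limit measure. If finite measures `μn`
supported on `closure Ω` converge weakly* to `μs`, `p n ↗ 2`, and each `μn n` satisfies
the rescaled monotonicity formula
`ϱ^{p_n-3} μn(B_ϱ(x₀)) ≤ r^{p_n-3} μn(closedBall_r(x₀))` for `0 < ϱ < r < dist(x₀,∂Ω)`,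
then `r ↦ μs(closedBall_r(x₀))/r` is nondecreasing on `(0, dist(x₀,∂Ω))`; in particular
the one-dimensional density `Θ₁(μs,x₀) = lim_{r→0⁺} μs(closedBall_r(x₀))/(2r)` exists
(as a finite limit). -/
theorem stmt13 (Ω : Set (EuclideanSpace ℝ (Fin 3)))
    (hΩo : IsOpen Ω) (hΩb : Bornology.IsBounded Ω)
    (μn : ℕ → Measure (EuclideanSpace ℝ (Fin 3)))
    (μs : Measure (EuclideanSpace ℝ (Fin 3)))
    [∀ n, IsFiniteMeasure (μn n)] [IsFiniteMeasure μs]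
    (hsupp : ∀ n, μn n (closure Ω)ᶜ = 0) (hsupps : μs (closure Ω)ᶜ = 0)
    (hweak : ∀ φ : EuclideanSpace ℝ (Fin 3) → ℝ, Continuous φ →
      Tendsto (fun n => ∫ x, φ x ∂μn n) atTop (𝓝 (∫ x, φ x ∂μs)))
    (x0 : EuclideanSpace ℝ (Fin 3)) (hx0 : x0 ∈ Ω)
    (p : ℕ → ℝ) (hp : ∀ n, p n ∈ Set.Ico (1 : ℝ) 2) (hpmono : Monotone p)
    (hpt : Tendsto p atTop (𝓝 2))
    (hmono : ∀ n, ∀ ϱ r : ℝ, 0 < ϱ → ϱ < r → r < infDist x0 (frontier Ω) →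
      ϱ ^ (p n - 3) * ((μn n) (ball x0 ϱ)).toReal ≤
        r ^ (p n - 3) * ((μn n) (closedBall x0 r)).toReal) :
    (∀ r1 ∈ Set.Ioo (0 : ℝ) (infDist x0 (frontier Ω)),
      ∀ r2 ∈ Set.Ioo (0 : ℝ) (infDist x0 (frontier Ω)), r1 ≤ r2 →
        (μs (closedBall x0 r1)).toReal / r1 ≤ (μs (closedBall x0 r2)).toReal / r2) ∧
      ∃ L : ℝ, Tendsto (fun r : ℝ => (μs (closedBall x0 r)).toReal / (2 * r))
        (𝓝[>] 0) (𝓝 L) := by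
  set d := infDist x0 (frontier Ω) with hdd
  -- the frontier is nonempty
  have hfne : (frontier Ω).Nonempty := by
    rw [nonempty_iff_ne_empty]
    intro h
    have hclopen : IsClopen Ω := isClopen_iff_frontier_eq_empty.mpr h
    rcases isClopen_iff.mp hclopen with h1 | h1
    · exact absurd (h1 ▸ hx0) (notMem_empty x0)
    · exact NormedSpace.unbounded_univ ℝ (EuclideanSpace ℝ (Fin 3)) (h1 ▸ hΩb)
  -- the distance to the frontier is positive
  have hd : 0 < d := by
    obtain ⟨δ, hδ, hball⟩ := Metric.isOpen_iff.mp hΩo x0 hx0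
    by_contra h
    push_neg at h
    obtain ⟨y, hy, hdy⟩ := (infDist_lt_iff hfne).mp (lt_of_le_of_lt h hδ)
    have : y ∈ Ω := hball (by rwa [mem_ball, dist_comm])
    rw [hΩo.frontier_eq] at hy
    exact hy.2 this
  -- key inequality
  have key : ∀ r1 r2 : ℝ, r1 ∈ Set.Ioo (0:ℝ) d → r2 ∈ Set.Ioo (0:ℝ) d → r1 < r2 →
      (μs (closedBall x0 r1)).toReal ≤ (r1 / r2) * (μs (closedBall x0 r2)).toReal := by
    intro r1 r2 hr1 hr2 hlt
    have hstep : ∀ ε ∈ Set.Ioo (0:ℝ) (r2 - r1),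
        (μs (closedBall x0 r1)).toReal ≤ ((r1 + ε) / r2) * (μs (closedBall x0 (ε + r2))).toReal := by
      intro ε hε
      obtain ⟨ψ, ψc, ψint⟩ := stmt13_bump x0 r1 ε hr1.1.le hε.1
      obtain ⟨φ, φc, φint⟩ := stmt13_bump x0 r2 ε hr2.1.le hε.1
      have hr1ε : 0 < r1 + ε := by linarith [hr1.1, hε.1]
      have hb : (0:ℝ) < r2 / (r1 + ε) := div_pos hr2.1 hr1ε
      set c : ℕ → ℝ := fun n => (r2 / (r1 + ε)) ^ (p n - 3) with hc_def
      have hn : ∀ n, ∫ x, ψ x ∂μn n ≤ c n * ∫ x, φ x ∂μn n := by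
        intro n
        have hB := hmono n (r1 + ε) r2 hr1ε (by linarith [hε.2]) hr2.2
        have hpos : (0:ℝ) < (r1 + ε) ^ (p n - 3) := Real.rpow_pos_of_pos hr1ε _
        have hcn : c n = r2 ^ (p n - 3) / (r1 + ε) ^ (p n - 3) :=
          Real.div_rpow hr2.1.le hr1ε.le _
        have h1 : ((μn n) (ball x0 (r1 + ε))).toReal ≤ c n * ((μn n) (closedBall x0 r2)).toReal := by
          rw [hcn, div_mul_eq_mul_div, le_div_iff₀ hpos, mul_comm]
          linarith [hB]
        have hcpos : 0 < c n := Real.rpow_pos_of_pos hb _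
        calc ∫ x, ψ x ∂μn n ≤ ((μn n) (ball x0 (r1 + ε))).toReal := (ψint (μn n)).2
          _ ≤ c n * ((μn n) (closedBall x0 r2)).toReal := h1
          _ ≤ c n * ∫ x, φ x ∂μn n :=
            mul_le_mul_of_nonneg_left (φint (μn n)).1 hcpos.le
      have hc : Tendsto c atTop (𝓝 ((r1 + ε) / r2)) := by
        have hlog : Tendsto (fun n => Real.log (r2 / (r1 + ε)) * (p n - 3)) atTop
            (𝓝 (Real.log (r2 / (r1 + ε)) * (2 - 3))) :=
          tendsto_const_nhds.mul (hpt.sub tendsto_const_nhds)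
        have := (Real.continuous_exp.continuousAt.tendsto).comp hlog
        have heq : Real.exp (Real.log (r2 / (r1 + ε)) * (2 - 3)) = (r1 + ε) / r2 := by
          have : (2:ℝ) - 3 = -1 := by norm_num
          rw [this, mul_neg_one, Real.exp_neg, Real.exp_log hb, inv_div]
        rw [heq] at this
        refine this.congr fun n => ?_
        simp only [Function.comp_apply, hc_def]
        rw [Real.rpow_def_of_pos hb]
      have hlim : ∫ x, ψ x ∂μs ≤ ((r1 + ε) / r2) * ∫ x, φ x ∂μs :=
        le_of_tendsto_of_tendsto' (hweak ψ ψc) (hc.mul (hweak φ φc)) hn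
      have hfin : ∫ x, φ x ∂μs ≤ (μs (closedBall x0 (ε + r2))).toReal := by
        refine (φint μs).2.trans (ENNReal.toReal_mono (measure_ne_top μs _) ?_)
        refine measure_mono (ball_subset_closedBall.trans ?_)
        rw [add_comm ε r2]
      calc (μs (closedBall x0 r1)).toReal ≤ ∫ x, ψ x ∂μs := (ψint μs).1
        _ ≤ ((r1 + ε) / r2) * ∫ x, φ x ∂μs := hlim
        _ ≤ ((r1 + ε) / r2) * (μs (closedBall x0 (ε + r2))).toReal :=
          mul_le_mul_of_nonneg_left hfin (div_pos hr1ε hr2.1).le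
    -- take ε → 0⁺
    have hmeas : Tendsto (fun ε : ℝ => ((r1 + ε) / r2) * (μs (closedBall x0 (ε + r2))).toReal)
        (𝓝[>] 0) (𝓝 ((r1 / r2) * (μs (closedBall x0 r2)).toReal)) := by
      have hA : Tendsto (fun ε : ℝ => (r1 + ε) / r2) (𝓝[>] 0) (𝓝 (r1 / r2)) := by
        have : Tendsto (fun ε : ℝ => (r1 + ε) / r2) (𝓝 0) (𝓝 ((r1 + 0) / r2)) :=
          ((continuous_const.add continuous_id).div_const r2).tendsto 0
        rw [add_zero] at this
        exact this.mono_left nhdsWithin_le_nhds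
      have hB0 : Tendsto (fun ε : ℝ => μs (cthickening ε (closedBall x0 r2))) (𝓝 0)
          (𝓝 (μs (closedBall x0 r2))) :=
        tendsto_measure_cthickening_of_isClosed ⟨1, one_pos, measure_ne_top μs _⟩
          isClosed_closedBall
      have hB1 : Tendsto (fun ε : ℝ => μs (closedBall x0 (ε + r2))) (𝓝[>] 0)
          (𝓝 (μs (closedBall x0 r2))) := by
        refine (hB0.mono_left nhdsWithin_le_nhds).congr' ?_
        filter_upwards [self_mem_nhdsWithin] with ε (hε : ε ∈ Ioi (0:ℝ))
        rw [cthickening_closedBall (le_of_lt hε) hr2.1.le]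
      have hB : Tendsto (fun ε : ℝ => (μs (closedBall x0 (ε + r2))).toReal) (𝓝[>] 0)
          (𝓝 ((μs (closedBall x0 r2)).toReal)) :=
        (ENNReal.tendsto_toReal (measure_ne_top μs _)).comp hB1
      exact hA.mul hB
    have hev : ∀ᶠ ε in 𝓝[>] (0:ℝ), (μs (closedBall x0 r1)).toReal ≤
        ((r1 + ε) / r2) * (μs (closedBall x0 (ε + r2))).toReal := by
      have h0 : (0:ℝ) ∈ Set.Ico (0:ℝ) (r2 - r1) := ⟨le_refl 0, by linarith⟩
      filter_upwards [Ioo_mem_nhdsGT_of_mem h0] with ε hε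
      exact hstep ε hε
    exact ge_of_tendsto hmeas hev
  have part1 : ∀ r1 ∈ Set.Ioo (0 : ℝ) d, ∀ r2 ∈ Set.Ioo (0 : ℝ) d, r1 ≤ r2 →
      (μs (closedBall x0 r1)).toReal / r1 ≤ (μs (closedBall x0 r2)).toReal / r2 := by
    intro r1 hr1 r2 hr2 hle
    rcases eq_or_lt_of_le hle with rfl | hlt
    · exact le_rfl
    · have hk := key r1 r2 hr1 hr2 hlt
      rw [div_le_div_iff₀ hr1.1 hr2.1]
      calc (μs (closedBall x0 r1)).toReal * r2
          ≤ (r1 / r2 * (μs (closedBall x0 r2)).toReal) * r2 :=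
            mul_le_mul_of_nonneg_right hk hr2.1.le
        _ = (μs (closedBall x0 r2)).toReal * r1 := by
            have h2 : r2 ≠ 0 := hr2.1.ne'
            field_simp
  refine ⟨part1, ?_⟩
  set f : ℝ → ℝ := fun r => (μs (closedBall x0 r)).toReal / r with hf
  have hmf : MonotoneOn f (Set.Ioo (0:ℝ) d) := fun a ha b hb hab => part1 a ha b hb hab
  have hbdd : BddBelow (f '' Set.Ioo (0:ℝ) d) := by
    refine ⟨0, fun y hy => ?_⟩
    obtain ⟨r, _, rfl⟩ := hy
    exact div_nonneg ENNReal.toReal_nonneg (le_of_lt (by exact_mod_cast ‹r ∈ Set.Ioo (0:ℝ) d›.1))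
  have hne : (Set.Ioo (0:ℝ) d).Nonempty := ⟨d / 2, half_pos hd, half_lt_self hd⟩
  have htend : Tendsto f (𝓝[>] (0:ℝ)) (𝓝 (sInf (f '' Set.Ioo (0:ℝ) d))) :=
    hmf.tendsto_nhdsWithin_Ioo_right hne hbdd
  refine ⟨sInf (f '' Set.Ioo (0:ℝ) d) / 2, ?_⟩
  refine (htend.div_const 2).congr fun r => ?_
  rw [hf]
  rw [div_div, mul_comm]
end
end
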